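/- Let p = (p₁,...,p_C) be a descending-sorted probability vector with p_k ≤ τ_pos for some k < C, and suppose the gap condition p_{k+1} ≤ p_k - τ_neg holds with τ_neg ≥ τ_pos - ε/(C-k) for some ε ≥ 0. Then the tail mass ∑_{i>k} p_i ≤ ε. -/
import Mathlib


/-- Choosing `τ_neg ≥ τ_pos - ε/(C-k)` controls the tail (negative
pseudo-label) mass to at most `ε`. -/
theorem tail_mass_le_eps_of_threshold_choice
    (C : ℕ) (p : ℕ → ℝ)
    (hnn : ∀ i, 1 ≤ i → i ≤ C → 0 ≤ p i)
    (hmono : ∀ i j, 1 ≤ i → i ≤ j → j ≤ C → p j ≤ p i)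
    (hsum : ∑ i ∈ Finset.Icc 1 C, p i = 1)
    (k : ℕ) (hk1 : 1 ≤ k) (hkC : k < C)
    (τpos τneg ε : ℝ) (hτpos : 0 ≤ τpos) (hτneg : 0 ≤ τneg) (hε : 0 ≤ ε)
    (hpk : p k ≤ τpos)
    (hτ : τpos - ε / ((C - k : ℕ) : ℝ) ≤ τneg)
    (hgap : p (k + 1) ≤ p k - τneg) :
    ∑ i ∈ Finset.Icc (k + 1) C, p i ≤ ε := by
  have hd : (0:ℝ) < ((C - k : ℕ) : ℝ) := by
    have : 0 < C - k := Nat.sub_pos_of_lt hkC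
    exact_mod_cast this
  have hterm : ∀ i ∈ Finset.Icc (k + 1) C, p i ≤ ε / ((C - k : ℕ) : ℝ) := by
    intro i hi
    simp only [Finset.mem_Icc] at hi
    have h1 : p i ≤ p (k + 1) := hmono (k+1) i (by omega) hi.1 hi.2
    have h2 : p (k + 1) ≤ τpos - τneg := le_trans hgap (by linarith)
    linarith [hτ]
  calc ∑ i ∈ Finset.Icc (k + 1) C, p i
      ≤ ∑ i ∈ Finset.Icc (k + 1) C, (ε / ((C - k : ℕ) : ℝ)) :=
        Finset.sum_le_sum hterm
    _ = ((C - k : ℕ) : ℝ) * (ε / ((C - k : ℕ) : ℝ)) := by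
        rw [Finset.sum_const, Nat.card_Icc]
        have : C + 1 - (k + 1) = C - k := by omega
        rw [this]; simp [nsmul_eq_mul]
    _ = ε := by field_simp
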